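/- The generating function value L_{(2)}(1,1) := ∑_{n=0}^∞ ζ({2}^n) equals sinh(π)/π, where ζ({2}^0) := 1. -/

import Mathlib

open Finset Filter Topology
open scoped ENNReal

namespace L2Gen

abbrev T (n : ℕ) := {f : Fin n → ℕ // (∀ i j : Fin n, i < j → f j < f i) ∧ ∀ i, 1 ≤ f i}

def Φ : (Σ n, T n) → Finset ℕ := fun p => Finset.image (fun i => p.2.1 i - 1) Finset.univ

lemma sub_inj {n : ℕ} (f : T n) : Function.Injective (fun i => f.1 i - 1) := by
  intro i j h
  simp only at h
  rcases lt_trichotomy i j with hij | hij | hij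
  · have := f.2.1 i j hij; have := f.2.2 i; have := f.2.2 j; omega
  · exact hij
  · have := f.2.1 j i hij; have := f.2.2 i; have := f.2.2 j; omega

lemma card_Φ (p : Σ n, T n) : (Φ p).card = p.1 := by
  rw [Φ, Finset.card_image_of_injective _ (sub_inj p.2)]
  simp

lemma F_strictMono {n : ℕ} (f : T n) : StrictMono (fun i : Fin n => f.1 i.rev - 1) := by
  intro i j hij
  show f.1 i.rev - 1 < f.1 j.rev - 1
  have h1 : j.rev < i.rev := by rwa [Fin.rev_lt_rev]
  have := f.2.1 j.rev i.rev h1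
  have := f.2.2 i.rev
  have := f.2.2 j.rev
  omega

lemma F_eq {n : ℕ} (f : T n) (t : Finset ℕ) (ht : t.card = n)
    (hm : ∀ x : Fin n, f.1 x.rev - 1 ∈ t) :
    (fun i : Fin n => f.1 i.rev - 1) = t.orderEmbOfFin ht :=
  Finset.orderEmbOfFin_unique ht hm (F_strictMono f)

lemma Φ_bij : Function.Bijective Φ := by
  constructor
  · rintro ⟨n, f⟩ ⟨m, g⟩ h
    have c1 := card_Φ ⟨n, f⟩
    have c2 := card_Φ ⟨m, g⟩
    rw [← h] at c2
    simp only at c1 c2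
    have hnm : n = m := by omega
    subst hnm
    have hmf : ∀ x : Fin n, f.1 x.rev - 1 ∈ Φ ⟨n, f⟩ :=
      fun x => Finset.mem_image.2 ⟨x.rev, Finset.mem_univ _, rfl⟩
    have hmg : ∀ x : Fin n, g.1 x.rev - 1 ∈ Φ ⟨n, f⟩ := by
      rw [h]
      exact fun x => Finset.mem_image.2 ⟨x.rev, Finset.mem_univ _, rfl⟩
    have h1 := F_eq f (Φ ⟨n, f⟩) c1 hmf
    have h2 := F_eq g (Φ ⟨n, f⟩) c1 hmg
    have hF := h1.trans h2.symm
    have hfg : f.1 = g.1 := by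
      funext i
      have := congrFun hF i.rev
      simp only [Fin.rev_rev] at this
      have := f.2.2 i
      have := g.2.2 i
      omega
    simp only [Sigma.mk.inj_iff, heq_eq_eq]
    exact ⟨trivial, Subtype.ext hfg⟩
  · intro t
    set e := t.orderEmbOfFin (rfl : t.card = t.card) with he
    refine ⟨⟨t.card, ⟨fun i => e i.rev + 1, ?_, fun i => Nat.le_add_left 1 _⟩⟩, ?_⟩
    · intro i j hij
      show e j.rev + 1 < e i.rev + 1
      have h1 : j.rev < i.rev := by rwa [Fin.rev_lt_rev]
      have := e.strictMono h1
      omega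
    · apply Finset.coe_injective
      rw [Φ]
      simp only [Nat.add_sub_cancel]
      rw [Finset.coe_image, Finset.coe_univ, Set.image_univ]
      have : Set.range (fun i : Fin t.card => e i.rev) = Set.range e := by
        show Set.range (⇑e ∘ Fin.rev) = Set.range ⇑e
        exact Function.Surjective.range_comp Fin.rev_surjective ⇑e
      rw [this, he, Finset.range_orderEmbOfFin]

/-- Sum over all finsets of products equals sup of partial products. -/
lemma tsum_finset_prod (u : ℕ → ℝ≥0∞) :
    ∑' t : Finset ℕ, ∏ k ∈ t, u k = ⨆ N : ℕ, ∏ k ∈ Finset.range N, (1 + u k) := by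
  rw [ENNReal.tsum_eq_iSup_sum' (fun N => (Finset.range N).powerset) ?_]
  · congr 1
    funext N
    rw [show (fun k => (1:ℝ≥0∞) + u k) = fun k => u k + 1 by funext k; ring,
      Finset.prod_add]
    simp
  · intro t
    refine ⟨(t.sup fun s => s.sup id) + 1, fun s hs => ?_⟩
    rw [Finset.mem_powerset]
    intro k hk
    rw [Finset.mem_range]
    have h1 : s.sup id ≤ t.sup fun s => s.sup id := Finset.le_sup hs
    have h2 : k ≤ s.sup id := Finset.le_sup (f := id) hk
    omega

lemma euler_tendsto :
    Tendsto (fun N => ∏ k ∈ Finset.range N, (1 + (((k : ℝ) + 1) ^ 2)⁻¹)) atTop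
      (𝓝 (Real.sinh Real.pi / Real.pi)) := by
  have hpi : (Real.pi : ℂ) * Complex.I ≠ 0 :=
    mul_ne_zero (Complex.ofReal_ne_zero.2 Real.pi_ne_zero) Complex.I_ne_zero
  have h := (Complex.tendsto_euler_sin_prod Complex.I).div_const ((Real.pi : ℂ) * Complex.I)
  have heq : (fun n : ℕ => (↑Real.pi * Complex.I * ∏ j ∈ Finset.range n,
        ((1 : ℂ) - Complex.I ^ 2 / ((j : ℂ) + 1) ^ 2)) / (↑Real.pi * Complex.I))
      = fun n : ℕ => ((∏ k ∈ Finset.range n, (1 + (((k : ℝ) + 1) ^ 2)⁻¹) : ℝ) : ℂ) := by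
    funext n
    rw [mul_div_cancel_left₀ _ hpi]
    push_cast
    apply Finset.prod_congr rfl
    intro j _
    rw [Complex.I_sq]
    have : ((j : ℂ) + 1) ^ 2 ≠ 0 := by
      apply pow_ne_zero
      have : ((j + 1 : ℕ) : ℂ) ≠ 0 := Nat.cast_ne_zero.2 (Nat.succ_ne_zero j)
      push_cast at this
      exact this
    field_simp
    ring
  rw [heq] at h
  have hlim : Complex.sin (↑Real.pi * Complex.I) / (↑Real.pi * Complex.I)
      = ((Real.sinh Real.pi / Real.pi : ℝ) : ℂ) := by
    rw [Complex.sin_mul_I, ← Complex.ofReal_sinh,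
      mul_div_mul_right _ _ Complex.I_ne_zero, Complex.ofReal_div]
  rw [hlim] at h
  have h2 := (Complex.continuous_re.tendsto _).comp h
  have h3 : (Complex.re ∘ fun n : ℕ =>
      ((∏ k ∈ Finset.range n, (1 + (((k : ℝ) + 1) ^ 2)⁻¹) : ℝ) : ℂ))
      = fun n : ℕ => ∏ k ∈ Finset.range n, (1 + (((k : ℝ) + 1) ^ 2)⁻¹) := by
    funext n
    exact Complex.ofReal_re _
  rw [h3, Complex.ofReal_re] at h2
  exact h2

noncomputable def u : ℕ → ℝ≥0∞ := fun m => (((m : ℝ≥0∞) + 1) ^ 2)⁻¹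

lemma prod_ofReal (N : ℕ) : ∏ k ∈ Finset.range N, (1 + u k)
    = ENNReal.ofReal (∏ k ∈ Finset.range N, (1 + (((k : ℝ) + 1) ^ 2)⁻¹)) := by
  rw [ENNReal.ofReal_prod_of_nonneg (fun k _ => by positivity)]
  apply Finset.prod_congr rfl
  intro k _
  have hpos : (0:ℝ) < ((k:ℝ)+1)^2 := by positivity
  rw [ENNReal.ofReal_add zero_le_one (by positivity), ENNReal.ofReal_one,
    ENNReal.ofReal_inv_of_pos hpos, ENNReal.ofReal_pow (by positivity),
    ENNReal.ofReal_add (by positivity) zero_le_one, ENNReal.ofReal_one,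
    ENNReal.ofReal_natCast]
  rfl

lemma iSup_eq :
    ⨆ N : ℕ, ∏ k ∈ Finset.range N, (1 + u k)
      = ENNReal.ofReal (Real.sinh Real.pi / Real.pi) := by
  have hmono : Monotone (fun N => ∏ k ∈ Finset.range N, (1 + u k)) := by
    intro a b hab
    exact Finset.prod_le_prod_of_subset_of_one_le' (Finset.range_subset_range.2 hab)
      (fun k _ _ => le_self_add)
  have h1 := tendsto_atTop_iSup hmono
  have h2 : Tendsto (fun N => ∏ k ∈ Finset.range N, (1 + u k)) atTop
      (𝓝 (ENNReal.ofReal (Real.sinh Real.pi / Real.pi))) := by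
    simp_rw [prod_ofReal]
    exact (ENNReal.continuous_ofReal.tendsto _).comp euler_tendsto
  exact tendsto_nhds_unique h1 h2

lemma key : (∑' n : ℕ, ∑' k : T n, ∏ i, ((k.1 i : ℝ≥0∞) ^ 2)⁻¹)
    = ENNReal.ofReal (Real.sinh Real.pi / Real.pi) := by
  have step : ∀ p : Σ n, T n,
      (∏ i, ((p.2.1 i : ℝ≥0∞) ^ 2)⁻¹) = ∏ m ∈ Φ p, u m := by
    rintro ⟨n, f⟩
    rw [Φ]
    simp only
    rw [Finset.prod_image (fun i _ j _ h => sub_inj f h)]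
    apply Finset.prod_congr rfl
    intro i _
    have h1 := f.2.2 i
    have h2 : (f.1 i - 1) + 1 = f.1 i := Nat.sub_add_cancel h1
    rw [u, ← h2]
    push_cast
    ring_nf
  calc (∑' n : ℕ, ∑' k : T n, ∏ i, ((k.1 i : ℝ≥0∞) ^ 2)⁻¹)
      = ∑' p : Σ n, T n, ∏ i, ((p.2.1 i : ℝ≥0∞) ^ 2)⁻¹ :=
        (ENNReal.tsum_sigma fun n (k : T n) => ∏ i, ((k.1 i : ℝ≥0∞) ^ 2)⁻¹).symm
    _ = ∑' p : Σ n, T n, ∏ m ∈ Φ p, u m := tsum_congr step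
    _ = ∑' t : Finset ℕ, ∏ m ∈ t, u m :=
        (Equiv.ofBijective Φ Φ_bij).tsum_eq (fun t => ∏ m ∈ t, u m)
    _ = ⨆ N : ℕ, ∏ k ∈ Finset.range N, (1 + u k) := tsum_finset_prod u
    _ = _ := iSup_eq

end L2Gen

/-- `L_{(2)}(1,1) = ∑_{n≥0} ζ({2}^n) = sinh(π)/π` (with `ζ({2}^0) = 1`). -/
theorem generating_function_L2_at_one :
    ∑' n : ℕ,
      ∑' k : {f : Fin n → ℕ // (∀ i j : Fin n, i < j → f j < f i) ∧ ∀ i, 1 ≤ f i},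
        ∏ i, ((k.1 i : ℝ) ^ 2)⁻¹ =
    Real.sinh Real.pi / Real.pi := by
  have hfin : ∀ (n : ℕ) (k : L2Gen.T n),
      (∏ i, ((k.1 i : ℝ≥0∞) ^ 2)⁻¹) ≠ ⊤ := by
    intro n k
    rw [← lt_top_iff_ne_top]
    apply ENNReal.prod_lt_top
    intro i _
    rw [lt_top_iff_ne_top, ENNReal.inv_ne_top]
    apply pow_ne_zero
    exact Nat.cast_ne_zero.2 (by have := k.2.2 i; omega)
  have hinner : ∀ n : ℕ,
      (∑' k : L2Gen.T n, ∏ i, ((k.1 i : ℝ≥0∞) ^ 2)⁻¹) ≠ ⊤ := by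
    intro n
    have hle : (∑' k : L2Gen.T n, ∏ i, ((k.1 i : ℝ≥0∞) ^ 2)⁻¹)
        ≤ ∑' n : ℕ, ∑' k : L2Gen.T n, ∏ i, ((k.1 i : ℝ≥0∞) ^ 2)⁻¹ :=
      ENNReal.le_tsum n
    rw [L2Gen.key] at hle
    exact (lt_of_le_of_lt hle ENNReal.ofReal_lt_top).ne
  have termeq : ∀ (n : ℕ) (k : L2Gen.T n),
      (∏ i, ((k.1 i : ℝ) ^ 2)⁻¹) = (∏ i, ((k.1 i : ℝ≥0∞) ^ 2)⁻¹).toReal := by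
    intro n k
    rw [ENNReal.toReal_prod]
    apply Finset.prod_congr rfl
    intro i _
    rw [ENNReal.toReal_inv, ENNReal.toReal_pow, ENNReal.toReal_natCast]
  calc ∑' n : ℕ, ∑' k : L2Gen.T n, ∏ i, ((k.1 i : ℝ) ^ 2)⁻¹
      = ∑' n : ℕ, (∑' k : L2Gen.T n, ∏ i, ((k.1 i : ℝ≥0∞) ^ 2)⁻¹).toReal := by
        apply tsum_congr
        intro n
        rw [ENNReal.tsum_toReal_eq (hfin n)]
        exact tsum_congr (termeq n)
    _ = (∑' n : ℕ, ∑' k : L2Gen.T n, ∏ i, ((k.1 i : ℝ≥0∞) ^ 2)⁻¹).toReal :=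
        (ENNReal.tsum_toReal_eq hinner).symm
    _ = (ENNReal.ofReal (Real.sinh Real.pi / Real.pi)).toReal := by rw [L2Gen.key]
    _ = Real.sinh Real.pi / Real.pi :=
        ENNReal.toReal_ofReal (div_nonneg (Real.sinh_nonneg_iff.2 Real.pi_nonneg) Real.pi_pos.le)
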